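/- Let f ∈ ℂ[z] be a polynomial of degree d > 1 and let a ∈ ℂ \ {0}. Then the functions z ↦ (d^n−1)^{-1}·log|(f^n)'(z) − a| − g_f(z) converge to 0 as n → ∞, uniformly on every compact subset of the set Ω := I_∞(f) \ ⋃_{n≥0} (f^n)^{-1}(C(f)∩ℂ). -/

import Mathlib

open Polynomial MeasureTheory Filter

/-- The `n`-th iterate of a polynomial `f` (as a polynomial). -/
noncomputable def polyIter (f : Polynomial ℂ) : ℕ → Polynomial ℂ
  | 0 => Polynomial.X
  | n + 1 => f.comp (polyIter f n)

/-- The basin of infinity `I_∞(f) = {z : |f^n(z)| → ∞}`. -/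
def basinInfty (f : Polynomial ℂ) : Set ℂ :=
  {z : ℂ | Tendsto (fun n : ℕ => ‖(polyIter f n).eval z‖) atTop atTop}

lemma aux_upper (p : Polynomial ℂ) : ∃ C : ℝ, 1 ≤ C ∧ ∀ w : ℂ,
    1 ≤ ‖w‖ → ‖p.eval w‖ ≤ C * ‖w‖ ^ p.natDegree := by
  refine ⟨(∑ i ∈ Finset.range (p.natDegree + 1), ‖p.coeff i‖) + 1,
    le_add_of_nonneg_left (Finset.sum_nonneg fun i _ => (norm_nonneg _)), ?_⟩
  intro w hw
  have h1 : ‖p.eval w‖ ≤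
      ∑ i ∈ Finset.range (p.natDegree + 1), ‖p.coeff i * w ^ i‖ := by
    rw [Polynomial.eval_eq_sum_range]
    exact norm_sum_le _ _
  have h2 : ∀ i ∈ Finset.range (p.natDegree + 1),
      ‖p.coeff i * w ^ i‖ ≤ ‖p.coeff i‖ * ‖w‖ ^ p.natDegree := by
    intro i hi
    rw [norm_mul, norm_pow]
    exact mul_le_mul_of_nonneg_left
      (pow_le_pow_right₀ hw (Nat.lt_succ_iff.mp (Finset.mem_range.mp hi)))
      (norm_nonneg _)
  calc ‖p.eval w‖ ≤ _ := h1
    _ ≤ ∑ i ∈ Finset.range (p.natDegree + 1),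
        ‖p.coeff i‖ * ‖w‖ ^ p.natDegree := Finset.sum_le_sum h2
    _ = (∑ i ∈ Finset.range (p.natDegree + 1), ‖p.coeff i‖)
        * ‖w‖ ^ p.natDegree := by rw [Finset.sum_mul]
    _ ≤ _ := by
        have : (0:ℝ) ≤ ‖w‖ ^ p.natDegree := pow_nonneg (norm_nonneg _) _
        nlinarith [pow_pos (lt_of_lt_of_le one_pos hw) p.natDegree]

lemma aux_two (p : Polynomial ℂ) (hp : 1 ≤ p.natDegree) : ∃ C : ℝ, 1 ≤ C ∧ ∃ R : ℝ, 1 ≤ R ∧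
    ∀ w : ℂ, R ≤ ‖w‖ →
      ‖w‖ ^ p.natDegree / C ≤ ‖p.eval w‖ ∧
      ‖p.eval w‖ ≤ C * ‖w‖ ^ p.natDegree := by
  obtain ⟨Cq, hCq1, hCq⟩ := aux_upper p.eraseLead
  have hp0 : p ≠ 0 := fun h => by simp [h] at hp
  have hlc : ‖p.leadingCoeff‖ > 0 := by
    simpa using (norm_pos_iff.mpr (Polynomial.leadingCoeff_ne_zero.mpr hp0))
  set L := ‖p.leadingCoeff‖ with hL
  refine ⟨max (2 / L) (Cq + L + 1), le_trans (by linarith) (le_max_right _ _),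
    max 1 (2 * Cq / L), le_max_left _ _, fun w hw => ?_⟩
  set C := max (2 / L) (Cq + L + 1) with hC
  have hC0 : 0 < C := lt_of_lt_of_le (by linarith) (le_max_right _ _)
  have hw1 : 1 ≤ ‖w‖ := le_trans (le_max_left _ _) hw
  have hw0 : 0 < ‖w‖ := lt_of_lt_of_le one_pos hw1
  have hwC : 2 * Cq / L ≤ ‖w‖ := le_trans (le_max_right _ _) hw
  set A := ‖w‖ with hA
  have hApos : 0 < A ^ p.natDegree := pow_pos hw0 _
  have hq : ‖p.eraseLead.eval w‖ ≤ Cq * A ^ (p.natDegree - 1) := by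
    refine le_trans (hCq w hw1) ?_
    exact mul_le_mul_of_nonneg_left
      (pow_le_pow_right₀ hw1 (Polynomial.eraseLead_natDegree_le p)) (by linarith)
  have hCA : Cq ≤ L / 2 * A := by
    rw [div_le_iff₀ hlc] at hwC
    nlinarith
  have hpowsub : A ^ (p.natDegree - 1) * A = A ^ p.natDegree := by
    rw [← pow_succ, Nat.sub_add_cancel hp]
  have hqL : Cq * A ^ (p.natDegree - 1) ≤ L / 2 * A ^ p.natDegree := by
    calc Cq * A ^ (p.natDegree - 1) ≤ (L / 2 * A) * A ^ (p.natDegree - 1) :=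
          mul_le_mul_of_nonneg_right hCA (pow_nonneg hw0.le _)
      _ = L / 2 * (A ^ (p.natDegree - 1) * A) := by ring
      _ = L / 2 * A ^ p.natDegree := by rw [hpowsub]
  have hsplit : p.eval w = p.eraseLead.eval w + p.leadingCoeff * w ^ p.natDegree := by
    conv_lhs => rw [← Polynomial.eraseLead_add_C_mul_X_pow p]
    rw [Polynomial.eval_add, Polynomial.eval_mul, Polynomial.eval_pow, Polynomial.eval_C,
      Polynomial.eval_X]
  have hmain : L / 2 * A ^ p.natDegree ≤ ‖p.eval w‖ := by
    have h3 : L * A ^ p.natDegree ≤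
        ‖p.eval w‖ + ‖p.eraseLead.eval w‖ := by
      have heq : L * A ^ p.natDegree
          = ‖p.eval w - p.eraseLead.eval w‖ := by
        rw [hsplit, show p.eraseLead.eval w + p.leadingCoeff * w ^ p.natDegree
          - p.eraseLead.eval w = p.leadingCoeff * w ^ p.natDegree by ring, norm_mul, norm_pow]
      rw [heq, sub_eq_add_neg]
      refine le_trans (norm_add_le _ _) ?_
      rw [norm_neg]
    nlinarith [le_trans hq hqL]
  constructor
  · refine le_trans ?_ hmain
    rw [div_le_iff₀ hC0]
    have hmx : 2 / L ≤ C := le_max_left _ _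
    calc A ^ p.natDegree = L / 2 * A ^ p.natDegree * (2 / L) := by field_simp
      _ ≤ L / 2 * A ^ p.natDegree * C := by
          refine mul_le_mul_of_nonneg_left hmx (by positivity)
  · rw [hsplit]
    refine le_trans (norm_add_le _ _) ?_
    have h1 : ‖p.leadingCoeff * w ^ p.natDegree‖ = L * A ^ p.natDegree := by
      rw [norm_mul, norm_pow]
    have hq2 : ‖p.eraseLead.eval w‖ ≤ Cq * A ^ p.natDegree := by
      refine le_trans hq ?_
      exact mul_le_mul_of_nonneg_left (pow_le_pow_right₀ hw1 (Nat.sub_le _ _)) (by linarith)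
    have hCle : Cq + L ≤ C := le_trans (by linarith) (le_max_right _ _)
    rw [h1]
    nlinarith

lemma aux_log (p : Polynomial ℂ) (hp : 1 ≤ p.natDegree) :
    ∃ C : ℝ, 1 ≤ C ∧ ∃ R : ℝ, 1 ≤ R ∧ ∀ w : ℂ, R ≤ ‖w‖ →
      p.eval w ≠ 0 ∧
      ‖w‖ ^ p.natDegree / C ≤ ‖p.eval w‖ ∧
      |Real.log (‖p.eval w‖) - (p.natDegree : ℝ) * Real.log (‖w‖)|
        ≤ Real.log C := by
  obtain ⟨C, hC1, R, hR1, hCR⟩ := aux_two p hp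
  refine ⟨C, hC1, R, hR1, fun w hw => ?_⟩
  obtain ⟨hlow, hupp⟩ := hCR w hw
  have hw1 : 1 ≤ ‖w‖ := le_trans hR1 hw
  have hw0 : (0:ℝ) < ‖w‖ := lt_of_lt_of_le one_pos hw1
  have hC0 : (0:ℝ) < C := lt_of_lt_of_le one_pos hC1
  have hApos : (0:ℝ) < ‖w‖ ^ p.natDegree := pow_pos hw0 _
  have hev0 : (0:ℝ) < ‖p.eval w‖ := lt_of_lt_of_le (by positivity) hlow
  refine ⟨fun h => by simp [h] at hev0, hlow, ?_⟩
  have hup : Real.log (‖p.eval w‖) ≤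
      (p.natDegree : ℝ) * Real.log (‖w‖) + Real.log C := by
    calc Real.log (‖p.eval w‖) ≤ Real.log (C * ‖w‖ ^ p.natDegree) :=
          Real.log_le_log hev0 hupp
      _ = Real.log C + (p.natDegree : ℝ) * Real.log (‖w‖) := by
          rw [Real.log_mul (ne_of_gt hC0) (ne_of_gt hApos), Real.log_pow]
      _ = _ := by ring
  have hlo : (p.natDegree : ℝ) * Real.log (‖w‖) - Real.log C ≤
      Real.log (‖p.eval w‖) := by
    calc (p.natDegree : ℝ) * Real.log (‖w‖) - Real.log C
        = Real.log (‖w‖ ^ p.natDegree / C) := by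
          rw [Real.log_div (ne_of_gt hApos) (ne_of_gt hC0), Real.log_pow]
      _ ≤ Real.log (‖p.eval w‖) := Real.log_le_log (by positivity) hlow
  rw [abs_le]
  constructor <;> linarith

lemma aux_tendsto (P Q : ℝ) {d : ℕ} (hd : 1 < d) :
    Tendsto (fun n : ℕ => (P + Q * n) / (d : ℝ) ^ n) atTop (nhds 0) := by
  have hd1 : (1:ℝ) < (d:ℝ) := by exact_mod_cast hd
  have hr0 : (0:ℝ) ≤ 1 / (d:ℝ) := by positivity
  have hr1 : 1 / (d:ℝ) < 1 := by
    rw [div_lt_one (by linarith)]; linarith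
  have h1 : Tendsto (fun n : ℕ => P * (1/(d:ℝ))^n) atTop (nhds 0) := by
    simpa using (tendsto_pow_atTop_nhds_zero_of_lt_one hr0 hr1).const_mul P
  have h2 : Tendsto (fun n : ℕ => Q * ((n:ℝ) * (1/(d:ℝ))^n)) atTop (nhds 0) := by
    simpa using (tendsto_self_mul_const_pow_of_lt_one hr0 hr1).const_mul Q
  have := h1.add h2
  rw [add_zero] at this
  refine this.congr fun n => ?_
  have hdn : ((d:ℝ))^n ≠ 0 := by positivity
  field_simp
  rw [one_div_pow, mul_comm, ← mul_assoc, mul_one_div_cancel hdn, one_mul]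

lemma polyIter_eval_succ (f : Polynomial ℂ) (n : ℕ) (z : ℂ) :
    (polyIter f (n+1)).eval z = f.eval ((polyIter f n).eval z) := by
  simp [polyIter, Polynomial.eval_comp]

lemma polyIter_deriv (f : Polynomial ℂ) (n : ℕ) (z : ℂ) :
    (Polynomial.derivative (polyIter f n)).eval z
      = ∏ k ∈ Finset.range n, (Polynomial.derivative f).eval ((polyIter f k).eval z) := by
  induction n with
  | zero => simp [polyIter]
  | succ n ih =>
    rw [show polyIter f (n+1) = f.comp (polyIter f n) from rfl, Polynomial.derivative_comp,
      Polynomial.eval_mul, Polynomial.eval_comp, ih, Finset.prod_range_succ]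

set_option maxHeartbeats 1000000 in
theorem stmt12 (f : Polynomial ℂ) (d : ℕ) (hd : 1 < d) (hdeg : f.natDegree = d)
    (g : ℂ → ℝ)
    (hg : ∀ z : ℂ, Tendsto
      (fun n : ℕ => Real.log (max 1 (‖(polyIter f n).eval z‖)) / (d : ℝ) ^ n)
      atTop (nhds (g z)))
    (a : ℂ) (ha : a ≠ 0)
    (K : Set ℂ) (hK : IsCompact K)
    (hKΩ : K ⊆ basinInfty f \
      ⋃ n : ℕ, {z : ℂ | (Polynomial.derivative f).eval ((polyIter f n).eval z) = 0}) :
    TendstoUniformlyOn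
      (fun (n : ℕ) (z : ℂ) =>
        Real.log (‖(Polynomial.derivative (polyIter f n)).eval z - a‖) /
          ((d : ℝ) ^ n - 1) - g z)
      0 atTop K := by
  classical
  have hd1 : (1:ℝ) < (d:ℝ) := by exact_mod_cast hd
  have hd0 : (0:ℝ) < (d:ℝ) := by linarith
  set w : ℕ → ℂ → ℂ := fun k z => (polyIter f k).eval z with hw
  -- degree of derivative
  have hf0 : f ≠ 0 := fun h => by simp [h] at hdeg; omega
  have hdeg' : (Polynomial.derivative f).natDegree = d - 1 := by
    have hle : (Polynomial.derivative f).natDegree ≤ d - 1 := by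
      simpa [hdeg] using Polynomial.natDegree_derivative_le f
    have hcoeff : (Polynomial.derivative f).coeff (d - 1) ≠ 0 := by
      rw [Polynomial.coeff_derivative]
      have h1 : d - 1 + 1 = d := by omega
      rw [h1]
      have h2 : f.coeff d ≠ 0 := by
        rw [← hdeg]
        exact mt Polynomial.leadingCoeff_eq_zero.mp hf0
      refine mul_ne_zero h2 ?_
      have : ((d - 1 : ℕ) : ℂ) + 1 = (d : ℂ) := by
        have : ((d - 1 : ℕ) : ℂ) = (d : ℂ) - 1 := by
          push_cast [Nat.cast_sub (by omega : 1 ≤ d)]; ring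
        rw [this]; ring
      rw [this]
      exact_mod_cast Nat.cast_ne_zero.mpr (by omega)
    exact le_antisymm hle (Polynomial.le_natDegree_of_ne_zero hcoeff)
  obtain ⟨Cf, hCf1, Rf, hRf1, hf_est⟩ := aux_log f (by omega)
  obtain ⟨Cg, hCg1, Rg, hRg1, hf'_est⟩ := aux_log (Polynomial.derivative f) (by rw [hdeg']; omega)
  rw [hdeg] at hf_est
  rw [hdeg'] at hf'_est
  set B : ℝ := Real.log Cf with hB
  set B' : ℝ := Real.log Cg with hB'
  have hB0 : 0 ≤ B := Real.log_nonneg hCf1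
  have hB'0 : 0 ≤ B' := Real.log_nonneg hCg1
  set R0 : ℝ := max (max Rf Rg) (Real.exp (B + 1)) with hR0
  have hR0f : Rf ≤ R0 := le_trans (le_max_left _ _) (le_max_left _ _)
  have hR0g : Rg ≤ R0 := le_trans (le_max_right _ _) (le_max_left _ _)
  have hR01 : 1 ≤ R0 := le_trans hRf1 hR0f
  have hR0e : Real.exp (B + 1) ≤ R0 := le_max_right _ _
  have hR0C : 2 * Cf ≤ R0 := by
    refine le_trans ?_ hR0e
    rw [Real.exp_add, Real.exp_log (by linarith : (0:ℝ) < Cf)]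
    nlinarith [Real.exp_one_gt_d9]
  have hR0log : B + 1 ≤ Real.log R0 := by
    have := Real.log_le_log (Real.exp_pos _) hR0e
    rwa [Real.log_exp] at this
  -- expansion property
  have hstep : ∀ u : ℂ, R0 ≤ ‖u‖ → 2 * ‖u‖ ≤ ‖f.eval u‖ := by
    intro u hu
    obtain ⟨-, hlow, -⟩ := hf_est u (le_trans hR0f hu)
    have hu1 : 1 ≤ ‖u‖ := le_trans hR01 hu
    have hu2 : 2 * Cf ≤ ‖u‖ := le_trans hR0C hu
    refine le_trans ?_ hlow
    rw [le_div_iff₀ (by linarith : (0:ℝ) < Cf)]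
    have hpw : ‖u‖ ≤ ‖u‖ ^ (d - 1) := by
      calc ‖u‖ = ‖u‖ ^ 1 := (pow_one _).symm
        _ ≤ _ := pow_le_pow_right₀ hu1 (by omega)
    have hdd : ‖u‖ ^ d = ‖u‖ ^ (d-1) * ‖u‖ := by
      rw [← pow_succ]; congr 1; omega
    rw [hdd]
    nlinarith
  -- uniform escape time
  have hcover : ∀ z ∈ K, ∃ N : ℕ, R0 < ‖w N z‖ := by
    intro z hz
    have hb : z ∈ basinInfty f := (hKΩ hz).1
    exact (hb.eventually_gt_atTop R0).exists
  have hmono : ∀ (z : ℂ) (i : ℕ), R0 < ‖w i z‖ →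
      ∀ k, i ≤ k → R0 < ‖w k z‖ := by
    intro z i hi k hik
    obtain ⟨j, rfl⟩ := Nat.exists_eq_add_of_le hik
    induction j with
    | zero => simpa using hi
    | succ j ih =>
      have h1 : R0 < ‖w (i + j) z‖ := ih (by omega)
      have h2 := hstep (w (i+j) z) h1.le
      have h3 : w (i + (j+1)) z = f.eval (w (i+j) z) := by
        show (polyIter f (i+j+1)).eval z = _
        rw [polyIter_eval_succ]
      rw [h3]
      nlinarith
  obtain ⟨N, hN⟩ : ∃ N : ℕ, ∀ z ∈ K, R0 < ‖w N z‖ := by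
    have hopen : ∀ i : ℕ, IsOpen {z : ℂ | R0 < ‖w i z‖} := by
      intro i
      have hc : Continuous fun z => ‖w i z‖ :=
        continuous_norm.comp (polyIter f i).continuous_aeval
      exact isOpen_lt continuous_const hc
    have hsub : K ⊆ ⋃ i : ℕ, {z : ℂ | R0 < ‖w i z‖} := fun z hz =>
      Set.mem_iUnion.mpr (hcover z hz)
    obtain ⟨t, ht⟩ := hK.elim_finite_subcover _ hopen hsub
    refine ⟨t.sup id, fun z hz => ?_⟩
    obtain ⟨i, hi, hzi⟩ := Set.mem_iUnion₂.mp (ht hz)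
    exact hmono z i hzi (t.sup id) (Finset.le_sup (f := id) hi)
  have hNall : ∀ z ∈ K, ∀ k, N ≤ k → R0 < ‖w k z‖ := fun z hz k hk =>
    hmono z N (hN z hz) k hk
  -- the derivative at iterates never vanishes on K
  have hKderiv : ∀ z ∈ K, ∀ n : ℕ, (Polynomial.derivative f).eval (w n z) ≠ 0 := by
    intro z hz n
    have := (hKΩ hz).2
    simp only [Set.mem_iUnion, Set.mem_setOf_eq, not_exists] at this
    exact this n
  set r : ℝ := 1 / (d:ℝ) with hr
  have hr0 : 0 ≤ r := by positivity
  have hr1 : r < 1 := by rw [hr, div_lt_one hd0]; linarith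
  -- key estimate: log |w k z| is within B of d^k * g z
  have hE4 : ∀ z ∈ K, ∀ k, N ≤ k →
      |Real.log (‖w k z‖) - (d:ℝ)^k * g z| ≤ B := by
    intro z hz k hk
    set u : ℕ → ℝ := fun n => Real.log (‖w n z‖) / (d:ℝ)^n with hu
    have hstepu : ∀ j, N ≤ j → |u (j+1) - u j| ≤ B * r^(j+1) := by
      intro j hj
      have hRj : R0 < ‖w j z‖ := hNall z hz j hj
      obtain ⟨-, -, hlog⟩ := hf_est (w j z) (le_trans hR0f hRj.le)
      have hw1 : w (j+1) z = f.eval (w j z) := by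
        show (polyIter f (j+1)).eval z = _
        rw [polyIter_eval_succ]
      have hdn : ((d:ℝ))^(j+1) ≠ 0 := by positivity
      have : u (j+1) - u j
          = (Real.log (‖f.eval (w j z)‖)
            - (d:ℝ) * Real.log (‖w j z‖)) / (d:ℝ)^(j+1) := by
        rw [hu]
        simp only [hw1]
        field_simp
        ring
      rw [this, abs_div, abs_of_pos (by positivity : (0:ℝ) < (d:ℝ)^(j+1))]
      rw [div_le_iff₀ (by positivity : (0:ℝ) < (d:ℝ)^(j+1))]
      have hrd : B * r^(j+1) * (d:ℝ)^(j+1) = B := by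
        rw [hr, div_pow, one_pow]
        field_simp
      rw [hrd]
      exact hlog
    have hcauchy : ∀ k', N ≤ k' → ∀ j, |u (k'+j) - u k'| ≤ B * r^k' := by
      intro k' hk' j
      have hS : ∀ j, |u (k'+j) - u k'| ≤ B * (r^k' * (1 - r^j) / ((d:ℝ) - 1)) := by
        intro j
        induction j with
        | zero => simp
        | succ j ih =>
          have h1 := hstepu (k'+j) (by omega)
          have htri : |u (k'+(j+1)) - u k'| ≤ |u (k'+j+1) - u (k'+j)| + |u (k'+j) - u k'| := by
            have : u (k'+(j+1)) - u k' = (u (k'+j+1) - u (k'+j)) + (u (k'+j) - u k') := by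
              have : k' + (j+1) = k' + j + 1 := by omega
              rw [this]; ring
            rw [this]
            exact abs_add_le _ _
          have hgeom : B * r^(k'+j+1) + B * (r^k' * (1 - r^j) / ((d:ℝ) - 1))
              = B * (r^k' * (1 - r^(j+1)) / ((d:ℝ) - 1)) := by
            have hd1' : (d:ℝ) - 1 ≠ 0 := by linarith
            have hrd : r * (d:ℝ) = 1 := by rw [hr]; field_simp
            field_simp
            linear_combination (B * r ^ (k' + j)) * hrd
          calc |u (k'+(j+1)) - u k'| ≤ _ := htri
            _ ≤ B * r^(k'+j+1) + B * (r^k' * (1 - r^j) / ((d:ℝ) - 1)) := by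
                exact add_le_add h1 ih
            _ = _ := hgeom
      refine le_trans (hS j) ?_
      have h1 : 1 - r^j ≤ 1 := by nlinarith [pow_nonneg hr0 j]
      have h2 : 0 ≤ 1 - r^j := by nlinarith [pow_le_one₀ hr0 hr1.le (n := j)]
      have hrk : (0:ℝ) ≤ r^k' := pow_nonneg hr0 _
      have hden : (1:ℝ) ≤ (d:ℝ) - 1 := by
        have : (2:ℝ) ≤ (d:ℝ) := by exact_mod_cast hd
        linarith
      calc B * (r^k' * (1 - r^j) / ((d:ℝ) - 1)) ≤ B * (r^k' * (1 - r^j)) :=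
            mul_le_mul_of_nonneg_left (div_le_self (mul_nonneg hrk h2) hden) hB0
        _ ≤ B * r^k' := mul_le_mul_of_nonneg_left (by nlinarith) hB0
    -- u tends to g z
    have hulim : Tendsto u atTop (nhds (g z)) := by
      refine (hg z).congr' ?_
      filter_upwards [eventually_ge_atTop N] with n hn
      have h1 : (1:ℝ) ≤ ‖w n z‖ := le_trans hR01 (hNall z hz n hn).le
      rw [hu]
      show Real.log (max 1 ‖w n z‖) / (d:ℝ)^n = _
      rw [max_eq_right h1]
    have hulim' : Tendsto (fun j => u (k + j)) atTop (nhds (g z)) := by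
      have := hulim.comp (tendsto_add_atTop_nat k)
      refine this.congr fun j => ?_
      simp [Function.comp, Nat.add_comm]
    have hgk : |g z - u k| ≤ B * r^k := by
      have htend : Tendsto (fun j => |u (k + j) - u k|) atTop (nhds (|g z - u k|)) :=
        ((hulim'.sub_const (u k)).abs)
      exact le_of_tendsto htend (Eventually.of_forall (hcauchy k hk))
    -- multiply by d^k
    have hdk : (0:ℝ) < (d:ℝ)^k := by positivity
    have huk : u k * (d:ℝ)^k = Real.log (‖w k z‖) := by
      rw [hu]; field_simp
    have hrk : r^k * (d:ℝ)^k = 1 := by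
      rw [hr, div_pow, one_pow]; field_simp
    have heq : Real.log (‖w k z‖) - (d:ℝ)^k * g z = (u k - g z) * (d:ℝ)^k := by
      rw [← huk]; ring
    calc |Real.log (‖w k z‖) - (d:ℝ)^k * g z|
        = |u k - g z| * (d:ℝ)^k := by rw [heq, abs_mul, abs_of_pos hdk]
      _ ≤ (B * r^k) * (d:ℝ)^k := by
          refine mul_le_mul_of_nonneg_right ?_ hdk.le
          rw [abs_sub_comm]; exact hgk
      _ = B := by rw [mul_assoc, hrk, mul_one]
  -- lower bound for g on K
  set m : ℝ := 1 / (d:ℝ)^N with hm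
  have hm0 : 0 < m := by positivity
  have hE5 : ∀ z ∈ K, m ≤ g z := by
    intro z hz
    have h4 := abs_le.mp (hE4 z hz N le_rfl)
    have hNz : (0:ℝ) < ‖w N z‖ := lt_of_lt_of_le (by linarith) (hN z hz).le
    have hlogR : Real.log R0 ≤ Real.log (‖w N z‖) :=
      Real.log_le_log (by linarith) (hN z hz).le
    have h5 : 1 ≤ (d:ℝ)^N * g z := by linarith [h4.2]
    rw [hm, div_le_iff₀ (by positivity : (0:ℝ) < (d:ℝ)^N)]
    linarith
  -- upper bound for g on K
  obtain ⟨MN, hMN⟩ := hK.exists_bound_of_continuousOn (polyIter f N).continuous_aeval.continuousOn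
  set Mg : ℝ := (Real.log (max 1 MN) + B) / (d:ℝ)^N with hMg
  have hlogMN : 0 ≤ Real.log (max 1 MN) := Real.log_nonneg (le_max_left _ _)
  have hMg0 : 0 ≤ Mg := div_nonneg (by linarith) (by positivity)
  have hgup : ∀ z ∈ K, |g z| ≤ Mg := by
    intro z hz
    have h4 := abs_le.mp (hE4 z hz N le_rfl)
    have hNz : (0:ℝ) < ‖w N z‖ := lt_of_lt_of_le (by linarith) (hN z hz).le
    have h5 : ‖w N z‖ ≤ max 1 MN := by
      refine le_trans ?_ (le_max_right _ _)
      simpa using hMN z hz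
    have h6 : Real.log (‖w N z‖) ≤ Real.log (max 1 MN) :=
      Real.log_le_log hNz h5
    have hgz0 : 0 ≤ g z := le_trans hm0.le (hE5 z hz)
    rw [abs_of_nonneg hgz0, hMg, le_div_iff₀ (by positivity : (0:ℝ) < (d:ℝ)^N)]
    linarith [h4.1, h6]
  -- bound for the first N factors of the derivative
  obtain ⟨Lb, hLb⟩ : ∃ Lb : ℝ, ∀ z ∈ K,
      ‖∑ k ∈ Finset.range N, Real.log (‖(Polynomial.derivative f).eval (w k z)‖)‖
        ≤ Lb := by
    refine hK.exists_bound_of_continuousOn ?_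
    refine continuousOn_finset_sum _ (fun k _ => ?_)
    refine ContinuousOn.log ?_ ?_
    · exact (continuous_norm.comp
        ((Polynomial.derivative f).continuous_aeval.comp
          (polyIter f k).continuous_aeval)).continuousOn
    · intro z hz
      exact norm_ne_zero_iff.mpr (hKderiv z hz k)
  set B2 : ℝ := B' + ((d:ℝ) - 1) * B with hB2
  have hB20 : 0 ≤ B2 := by
    have : (0:ℝ) ≤ ((d:ℝ) - 1) * B := mul_nonneg (by linarith) hB0
    rw [hB2]; linarith
  set A1 : ℝ := Lb + (d:ℝ)^N * Mg with hA1
  -- the main estimate on log of the derivative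
  have hE9 : ∀ z ∈ K, ∀ n, N ≤ n →
      |Real.log (‖(Polynomial.derivative (polyIter f n)).eval z‖)
        - (d:ℝ)^n * g z| ≤ A1 + B2 * n := by
    intro z hz n hn
    have hLb0 : (0:ℝ) ≤ Lb := le_trans (norm_nonneg _) (hLb z hz)
    have habs : ‖(Polynomial.derivative (polyIter f n)).eval z‖
        = ∏ k ∈ Finset.range n, ‖(Polynomial.derivative f).eval (w k z)‖ := by
      rw [polyIter_deriv]
      exact norm_prod _ _
    have hlogprod : Real.log (‖(Polynomial.derivative (polyIter f n)).eval z‖)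
        = ∑ k ∈ Finset.range n,
            Real.log (‖(Polynomial.derivative f).eval (w k z)‖) := by
      rw [habs]
      exact Real.log_prod (fun k _ => norm_ne_zero_iff.mpr (hKderiv z hz k))
    set t : ℕ → ℝ := fun k => Real.log (‖(Polynomial.derivative f).eval (w k z)‖)
      with ht
    have hsplit : ∑ k ∈ Finset.range n, t k
        = (∑ k ∈ Finset.range N, t k) + ∑ k ∈ Finset.Ico N n, t k := by
      rw [Finset.range_eq_Ico, Finset.range_eq_Ico]
      exact (Finset.sum_Ico_consecutive _ (Nat.zero_le N) hn).symm
    have hterm : ∀ k ∈ Finset.Ico N n,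
        |t k - ((d:ℝ)-1) * ((d:ℝ)^k * g z)| ≤ B2 := by
      intro k hk
      obtain ⟨hk1, -⟩ := Finset.mem_Ico.mp hk
      have hRk := hNall z hz k hk1
      obtain ⟨-, -, hlog'⟩ := hf'_est (w k z) (le_trans hR0g hRk.le)
      have hcast : ((d - 1 : ℕ) : ℝ) = (d:ℝ) - 1 := by
        push_cast [Nat.cast_sub (by omega : 1 ≤ d)]
        ring
      rw [hcast] at hlog'
      have h4 := hE4 z hz k hk1
      have htri : |t k - ((d:ℝ)-1) * ((d:ℝ)^k * g z)|
          ≤ |t k - ((d:ℝ)-1) * Real.log (‖w k z‖)|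
            + ((d:ℝ)-1) * |Real.log (‖w k z‖) - (d:ℝ)^k * g z| := by
        have heq : t k - ((d:ℝ)-1) * ((d:ℝ)^k * g z)
            = (t k - ((d:ℝ)-1) * Real.log (‖w k z‖))
              + (((d:ℝ)-1) * (Real.log (‖w k z‖) - (d:ℝ)^k * g z)) := by ring
        rw [heq]
        refine le_trans (abs_add_le _ _) ?_
        rw [abs_mul, abs_of_nonneg (by linarith : (0:ℝ) ≤ (d:ℝ)-1)]
      refine le_trans htri ?_
      rw [hB2]
      have h5 : ((d:ℝ)-1) * |Real.log (‖w k z‖) - (d:ℝ)^k * g z|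
          ≤ ((d:ℝ)-1) * B := mul_le_mul_of_nonneg_left h4 (by linarith)
      linarith [hlog']
    have hsum2 : |∑ k ∈ Finset.Ico N n, t k
        - ∑ k ∈ Finset.Ico N n, ((d:ℝ)-1) * ((d:ℝ)^k * g z)| ≤ B2 * n := by
      rw [← Finset.sum_sub_distrib]
      refine le_trans (Finset.abs_sum_le_sum_abs _ _) ?_
      refine le_trans (Finset.sum_le_card_nsmul _ _ B2 hterm) ?_
      rw [nsmul_eq_mul]
      have hcard : ((Finset.Ico N n).card : ℝ) ≤ (n : ℝ) := by
        rw [Nat.card_Ico]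
        exact_mod_cast Nat.sub_le n N
      nlinarith
    have hgeo : ∑ k ∈ Finset.Ico N n, ((d:ℝ)-1) * ((d:ℝ)^k * g z)
        = ((d:ℝ)^n - (d:ℝ)^N) * g z := by
      have h7 : ∑ k ∈ Finset.Ico N n, ((d:ℝ))^k = ((d:ℝ)^n - (d:ℝ)^N)/((d:ℝ)-1) :=
        geom_sum_Ico (by linarith : (d:ℝ) ≠ 1) hn
      calc ∑ k ∈ Finset.Ico N n, ((d:ℝ)-1) * ((d:ℝ)^k * g z)
          = (((d:ℝ)-1) * g z) * ∑ k ∈ Finset.Ico N n, ((d:ℝ))^k := by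
            rw [Finset.mul_sum]
            exact Finset.sum_congr rfl (fun k _ => by ring)
        _ = ((d:ℝ)^n - (d:ℝ)^N) * g z := by
            have hd1' : (d:ℝ) - 1 ≠ 0 := by linarith
            rw [h7]
            field_simp
    have hdecomp : Real.log (‖(Polynomial.derivative (polyIter f n)).eval z‖)
        - (d:ℝ)^n * g z
        = (∑ k ∈ Finset.range N, t k)
          + ((∑ k ∈ Finset.Ico N n, t k) - ∑ k ∈ Finset.Ico N n, ((d:ℝ)-1) * ((d:ℝ)^k * g z))
          - (d:ℝ)^N * g z := by
      rw [hlogprod, hsplit, hgeo]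
      ring
    rw [hdecomp]
    have hb1 : |∑ k ∈ Finset.range N, t k| ≤ Lb := by
      simpa using hLb z hz
    have hb3 : |(d:ℝ)^N * g z| ≤ (d:ℝ)^N * Mg := by
      rw [abs_mul, abs_of_pos (by positivity : (0:ℝ) < (d:ℝ)^N)]
      exact mul_le_mul_of_nonneg_left (hgup z hz) (by positivity)
    refine le_trans (abs_sub _ _) ?_
    rw [hA1]
    have := abs_add_le (∑ k ∈ Finset.range N, t k)
      ((∑ k ∈ Finset.Ico N n, t k) - ∑ k ∈ Finset.Ico N n, ((d:ℝ)-1) * ((d:ℝ)^k * g z))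
    linarith
  -- final convergence
  set T0 : ℝ := max (Real.log (2 * ‖a‖)) 0 with hT0
  have hT00 : 0 ≤ T0 := le_max_right _ _
  have hev1 : ∀ᶠ n : ℕ in atTop, ((A1 + T0) + B2 * n) / (d:ℝ)^n < m :=
    (aux_tendsto (A1 + T0) B2 hd).eventually_lt_const hm0
  rw [Metric.tendstoUniformlyOn_iff]
  intro ε hε
  have hev2 : ∀ᶠ n : ℕ in atTop,
      ((2*(A1 + Real.log 2 + Mg)) + (2*B2) * n) / (d:ℝ)^n < ε :=
    (aux_tendsto _ _ hd).eventually_lt_const hε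
  filter_upwards [hev1, hev2, eventually_ge_atTop N, eventually_ge_atTop 1]
    with n h1 h2 hnN hn1
  intro z hz
  have hLb0 : (0:ℝ) ≤ Lb := le_trans (norm_nonneg _) (hLb z hz)
  have hA10 : (0:ℝ) ≤ A1 := by
    rw [hA1]
    have : (0:ℝ) ≤ (d:ℝ)^N * Mg := mul_nonneg (by positivity) hMg0
    linarith
  have h2n : (2:ℝ) ≤ (d:ℝ)^n := by
    calc (2:ℝ) ≤ (d:ℝ) := by exact_mod_cast hd
      _ ≤ (d:ℝ)^n := le_self_pow₀ (by linarith) (by omega)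
  have hdenpos : (0:ℝ) < (d:ℝ)^n - 1 := by linarith
  set Dz : ℂ := (Polynomial.derivative (polyIter f n)).eval z with hDz
  have hD0 : Dz ≠ 0 := by
    rw [hDz, polyIter_deriv]
    exact Finset.prod_ne_zero_iff.mpr (fun k _ => hKderiv z hz k)
  have hDpos : (0:ℝ) < ‖Dz‖ := norm_pos_iff.mpr hD0
  have hE9z := abs_le.mp (hE9 z hz n hnN)
  -- |D| is large
  have hgm := hE5 z hz
  have h1' : (A1 + T0) + B2 * n < m * (d:ℝ)^n := by
    rw [div_lt_iff₀ (by positivity : (0:ℝ) < (d:ℝ)^n)] at h1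
    linarith
  have hlogD_gt : T0 < Real.log (‖Dz‖) := by
    have hmn : m * (d:ℝ)^n ≤ g z * (d:ℝ)^n :=
      mul_le_mul_of_nonneg_right hgm (by positivity)
    linarith [hE9z.1]
  have h2a : (0:ℝ) < 2 * ‖a‖ := by
    have := norm_pos_iff.mpr ha
    linarith
  have hDge : 2 * ‖a‖ < ‖Dz‖ := by
    have hlt : Real.log (2 * ‖a‖) < Real.log (‖Dz‖) :=
      lt_of_le_of_lt (le_max_left _ _) hlogD_gt
    exact (Real.log_lt_log_iff h2a hDpos).mp hlt
  have hsub_low : ‖Dz‖ / 2 ≤ ‖Dz - a‖ := by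
    have h8 : ‖Dz‖ ≤ ‖Dz - a‖ + ‖a‖ := by
      have := norm_add_le (Dz - a) a
      simpa using this
    linarith
  have hsub_up : ‖Dz - a‖ ≤ 2 * ‖Dz‖ := by
    have h8 : ‖Dz - a‖ ≤ ‖Dz‖ + ‖a‖ := by
      rw [sub_eq_add_neg]
      refine le_trans (norm_add_le _ _) ?_
      rw [norm_neg]
    linarith
  have hsubpos : (0:ℝ) < ‖Dz - a‖ := lt_of_lt_of_le (by linarith) hsub_low
  have hlogsub : |Real.log (‖Dz - a‖) - Real.log (‖Dz‖)|
      ≤ Real.log 2 := by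
    rw [abs_le]
    constructor
    · have hup : Real.log (‖Dz‖ / 2) ≤ Real.log (‖Dz - a‖) :=
        Real.log_le_log (by linarith) hsub_low
      rw [Real.log_div (ne_of_gt hDpos) (by norm_num)] at hup
      linarith
    · have hup : Real.log (‖Dz - a‖) ≤ Real.log (2 * ‖Dz‖) :=
        Real.log_le_log hsubpos hsub_up
      rw [Real.log_mul (by norm_num) (ne_of_gt hDpos)] at hup
      linarith
  have hfinal : |Real.log (‖Dz - a‖) - (d:ℝ)^n * g z|
      ≤ A1 + B2 * n + Real.log 2 := by
    have htri : |Real.log (‖Dz - a‖) - (d:ℝ)^n * g z|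
        ≤ |Real.log (‖Dz - a‖) - Real.log (‖Dz‖)|
          + |Real.log (‖Dz‖) - (d:ℝ)^n * g z| := by
      have heq : Real.log (‖Dz - a‖) - (d:ℝ)^n * g z
          = (Real.log (‖Dz - a‖) - Real.log (‖Dz‖))
            + (Real.log (‖Dz‖) - (d:ℝ)^n * g z) := by ring
      rw [heq]
      exact abs_add_le _ _
    have h9 := abs_le.mpr hE9z
    refine le_trans htri ?_
    linarith [hlogsub]
  -- conclude
  rw [Real.dist_eq]
  have hnum : |Real.log (‖Dz - a‖) - ((d:ℝ)^n - 1) * g z|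
      ≤ A1 + B2 * n + Real.log 2 + Mg := by
    have heq : Real.log (‖Dz - a‖) - ((d:ℝ)^n - 1) * g z
        = (Real.log (‖Dz - a‖) - (d:ℝ)^n * g z) + g z := by ring
    rw [heq]
    refine le_trans (abs_add_le _ _) ?_
    linarith [hgup z hz, hfinal]
  have hexpr : (0 : ℂ → ℝ) z - (Real.log (‖Dz - a‖) / ((d:ℝ)^n - 1) - g z)
      = -((Real.log (‖Dz - a‖) - ((d:ℝ)^n - 1) * g z) / ((d:ℝ)^n - 1)) := by
    have : (0 : ℂ → ℝ) z = 0 := rfl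
    rw [this]
    field_simp
    ring
  rw [hexpr, abs_neg, abs_div, abs_of_pos hdenpos]
  rw [div_lt_iff₀ hdenpos]
  have hlog2 : (0:ℝ) ≤ Real.log 2 := Real.log_nonneg (by norm_num)
  have h2' : (2*(A1 + Real.log 2 + Mg)) + (2*B2) * n < ε * (d:ℝ)^n := by
    rw [div_lt_iff₀ (by positivity : (0:ℝ) < (d:ℝ)^n)] at h2
    linarith
  -- (A1 + B2 n + log 2 + Mg) ≤ ε * (d^n - 1) since 2*(...) < ε * d^n and d^n - 1 ≥ d^n/2
  have hX0 : (0:ℝ) ≤ A1 + B2 * n + Real.log 2 + Mg := by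
    have : (0:ℝ) ≤ B2 * n := mul_nonneg hB20 (by positivity)
    linarith
  refine lt_of_le_of_lt hnum ?_
  have hhalf : ε * ((d:ℝ)^n / 2) ≤ ε * ((d:ℝ)^n - 1) :=
    mul_le_mul_of_nonneg_left (by linarith) hε.le
  linarith
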